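/- Let p be a prime and let Q_0, Q_1, …, Q_k be pairwise disjoint sets of prime divisors of p − 1. For i = 0, 1, …, k let m_i = ∏_{q ∈ Q_i} q, and suppose n_i is an integer not divisible by p such that (a) n_i is a q-th power nonresidue modulo p for every prime q ∈ Q_i, and (b) n_i is a q-th power residue modulo p for every prime q ∈ Q_0 ∪ ⋯ ∪ Q_{i−1}. Then there exist integers a_1, …, a_k with 0 ≤ a_i < J(m_i) for each i, such that n_0 · n_1^{a_1} · n_2^{a_2} ⋯ n_k^{a_k} is a q-th power nonresidue modulo p for every prime q ∈ Q_0 ∪ Q_1 ∪ ⋯ ∪ Q_k. -/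

import Mathlib

open Real Finset

/-- `n` is a `q`-th power residue modulo `p`: `n ≡ m^q (mod p)` for some integer `m`. -/
def IsResidue (p q : ℕ) (n : ℤ) : Prop := ∃ m : ℤ, m ^ q ≡ n [ZMOD (p : ℤ)]

/-- `n` is a `q`-th power nonresidue modulo `p`: `n` is not divisible by `p`
and is not a `q`-th power residue modulo `p`. -/
def IsNonresidue (p q : ℕ) (n : ℤ) : Prop := ¬ (p : ℤ) ∣ n ∧ ¬ IsResidue p q n

/-- Jacobsthal's function: the smallest positive integer `J` such that every set of `J`
consecutive integers contains an integer coprime to `m`. -/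
noncomputable def jacobsthal (m : ℕ) : ℕ :=
  sInf {J : ℕ | 0 < J ∧ ∀ a : ℤ, ∃ b : ℤ, a ≤ b ∧ b < a + J ∧ Int.gcd b (m : ℤ) = 1}

lemma jacobsthal_mem (m : ℕ) (hm : 0 < m) :
    0 < jacobsthal m ∧ ∀ a : ℤ, ∃ b : ℤ, a ≤ b ∧ b < a + jacobsthal m ∧
      Int.gcd b (m : ℤ) = 1 := by
  have hne : (m : ℕ) ∈ {J : ℕ | 0 < J ∧ ∀ a : ℤ, ∃ b : ℤ, a ≤ b ∧ b < a + J ∧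
      Int.gcd b (m : ℤ) = 1} := by
    refine ⟨hm, fun a => ⟨a + (1 - a) % m, ?_, ?_, ?_⟩⟩
    · have : 0 ≤ (1 - a) % (m : ℤ) := Int.emod_nonneg _ (by exact_mod_cast hm.ne')
      omega
    · have : (1 - a) % (m : ℤ) < m := Int.emod_lt_of_pos _ (by exact_mod_cast hm)
      omega
    · have h1 : (a + (1 - a) % m) % (m : ℤ) = 1 % m := by
        conv_rhs => rw [show (1 : ℤ) = a + (1 - a) by ring]
        rw [Int.add_emod, Int.emod_emod_of_dvd _ dvd_rfl, ← Int.add_emod]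
      have h2 : (m : ℤ) ∣ (a + (1 - a) % m) - 1 := Int.ModEq.dvd (Int.ModEq.symm h1)
      obtain ⟨c, hc⟩ := h2
      have hb : a + (1 - a) % m = 1 + m * c := by omega
      rw [hb]
      exact Int.isCoprime_iff_gcd_eq_one.mp ⟨1, -c, by ring⟩
  exact (Nat.sInf_mem ⟨m, hne⟩ : _)

/-- The key step: choose an exponent `a < J(∏ Qi)` avoiding all the bad residue classes. -/
lemma step_lemma (Qi : Finset ℕ) (hq : ∀ q ∈ Qi, q.Prime) (e : ℕ)
    (he : ∀ q ∈ Qi, ¬ q ∣ e) (S : ℕ) :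
    ∃ a : ℕ, a < jacobsthal (∏ q ∈ Qi, q) ∧ ∀ q ∈ Qi, ¬ (q : ℤ) ∣ ((a : ℤ) * e + S) := by
  set m : ℕ := ∏ q ∈ Qi, q with hmdef
  have hmpos : 0 < m := Finset.prod_pos fun q hqq => (hq q hqq).pos
  have hcop : Nat.Coprime e m :=
    Nat.Coprime.prod_right fun q hqq =>
      ((hq q hqq).coprime_iff_not_dvd.mpr (he q hqq)).symm
  have hbez : (Int.gcd (e : ℤ) (m : ℤ) : ℤ) = e * Int.gcdA e m + m * Int.gcdB e m :=
    Int.gcd_eq_gcd_ab (e : ℤ) (m : ℤ)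
  set t : ℤ := Int.gcdA e m with htdef
  have hgcd1 : (Int.gcd (e : ℤ) (m : ℤ) : ℤ) = 1 := by
    rw [Int.gcd_natCast_natCast]; exact_mod_cast hcop
  rw [hgcd1] at hbez
  have het : (m : ℤ) ∣ (e : ℤ) * t - 1 := ⟨-Int.gcdB e m, by linarith⟩
  obtain ⟨hJpos, hJ⟩ := jacobsthal_mem m hmpos
  obtain ⟨b, hb1, hb2, hb3⟩ := hJ ((S : ℤ) * t)
  refine ⟨(b - S * t).toNat, ?_, ?_⟩
  · omega
  · intro q hqq hdvd
    have hqm : (q : ℤ) ∣ (m : ℤ) :=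
      Int.natCast_dvd_natCast.mpr (Finset.dvd_prod_of_mem _ hqq)
    have hbt : ((b - S * t).toNat : ℤ) = (b - S * t : ℤ) := by omega
    rw [hbt] at hdvd
    have h1 : (q : ℤ) ∣ ((b - S * t) * e + S) * t := Dvd.dvd.mul_right hdvd t
    have h2 : (q : ℤ) ∣ (e : ℤ) * t - 1 := dvd_trans hqm het
    have h3 : (q : ℤ) ∣ b := by
      have hid : ((b - S * t) * e + S) * t - (b - S * t) * ((e : ℤ) * t - 1) = b := by
        ring
      rw [← hid]
      exact dvd_sub h1 (Dvd.dvd.mul_left h2 _)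
    have hq1 : (q : ℤ) ∣ (Int.gcd b (m : ℤ) : ℤ) := Int.dvd_coe_gcd h3 hqm
    rw [hb3] at hq1
    have := Int.le_of_dvd one_pos hq1
    have := (hq q hqq).two_le
    omega

/-- In a finite cyclic group generated by `g`, `g^e` is a `q`-th power iff `q ∣ e`,
provided `q` divides the order of the group. -/
lemma pow_mem_iff {G : Type*} [Group G] [Fintype G] (g : G)
    (hg : ∀ x : G, x ∈ Subgroup.zpowers g) (q e : ℕ) (hq : q ∣ Fintype.card G) :
    (∃ v : G, v ^ q = g ^ e) ↔ q ∣ e := by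
  have horder : orderOf g = Fintype.card G := by
    rw [orderOf_eq_card_of_forall_mem_zpowers hg, Nat.card_eq_fintype_card]
  constructor
  · rintro ⟨v, hv⟩
    obtain ⟨f, hf⟩ : ∃ f : ℕ, g ^ f = v := by
      have h := hg v
      rw [← mem_powers_iff_mem_zpowers] at h
      exact (Submonoid.mem_powers_iff _ _).mp h
    rw [← hf, ← pow_mul] at hv
    have hmod : f * q ≡ e [MOD orderOf g] := pow_eq_pow_iff_modEq.mp hv
    rw [horder] at hmod
    have hmodq : f * q ≡ e [MOD q] := Nat.ModEq.of_dvd hq hmod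
    have h0 : (0 : ℕ) ≡ e [MOD q] :=
      (Nat.modEq_zero_iff_dvd.mpr (dvd_mul_left q f)).symm.trans hmodq
    exact Nat.modEq_zero_iff_dvd.mp h0.symm
  · rintro ⟨f, rfl⟩
    exact ⟨g ^ f, by rw [← pow_mul, mul_comm]⟩

lemma isResidue_iff_unit {p : ℕ} [Fact p.Prime] (q : ℕ) (hq : 0 < q) (n : ℤ)
    (u : (ZMod p)ˣ) (hu : (u : ZMod p) = (n : ZMod p)) :
    IsResidue p q n ↔ ∃ v : (ZMod p)ˣ, v ^ q = u := by
  constructor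
  · rintro ⟨m, hm⟩
    have hm' : ((m : ZMod p)) ^ q = (n : ZMod p) := by
      have := (ZMod.intCast_eq_intCast_iff' (m ^ q) n p).mpr hm
      push_cast at this; exact this
    have hmne : (m : ZMod p) ≠ 0 := by
      intro h0
      rw [h0, zero_pow hq.ne'] at hm'
      exact (Units.ne_zero u) (by rw [hu, ← hm'])
    refine ⟨Units.mk0 _ hmne, ?_⟩
    ext
    push_cast
    rw [Units.val_mk0, hm', hu]
  · rintro ⟨v, hv⟩
    refine ⟨((v : ZMod p).val : ℤ), (ZMod.intCast_eq_intCast_iff' _ _ p).mp ?_⟩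
    push_cast
    rw [ZMod.natCast_val, ZMod.cast_id, ← hu, ← hv]
    push_cast
    rfl

theorem nonresidue_for_many_q
    (p : ℕ) (hp : p.Prime) (k : ℕ) (Q : Fin (k + 1) → Finset ℕ)
    (hQsub : ∀ i, Q i ⊆ (p - 1).primeFactors)
    (hdisj : ∀ i j, i ≠ j → Disjoint (Q i) (Q j))
    (n : Fin (k + 1) → ℤ)
    (hnp : ∀ i, ¬ (p : ℤ) ∣ n i)
    (hA : ∀ i, ∀ q ∈ Q i, IsNonresidue p q (n i))
    (hB : ∀ i j : Fin (k + 1), j < i → ∀ q ∈ Q j, IsResidue p q (n i)) :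
    ∃ a : Fin (k + 1) → ℕ, a 0 = 1 ∧
      (∀ i : Fin (k + 1), 0 < (i : ℕ) → a i < jacobsthal (∏ q ∈ Q i, q)) ∧
      ∀ i, ∀ q ∈ Q i, IsNonresidue p q (∏ j, n j ^ a j) := by
  haveI : Fact p.Prime := ⟨hp⟩
  obtain ⟨g, hg⟩ := IsCyclic.exists_generator (α := (ZMod p)ˣ)
  have hn0 : ∀ i, ((n i : ZMod p)) ≠ 0 := fun i h =>
    hnp i ((ZMod.intCast_zmod_eq_zero_iff_dvd _ _).mp h)
  have hQprime : ∀ i, ∀ q ∈ Q i, q.Prime := fun i q hqq =>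
    (Nat.mem_primeFactors.mp (hQsub i hqq)).1
  have hQdvd : ∀ i, ∀ q ∈ Q i, q ∣ p - 1 := fun i q hqq =>
    (Nat.mem_primeFactors.mp (hQsub i hqq)).2.1
  have hcard : Fintype.card (ZMod p)ˣ = p - 1 := ZMod.card_units p
  have he : ∀ i, ∃ e : ℕ, g ^ e = Units.mk0 _ (hn0 i) := fun i => by
    have h := hg (Units.mk0 _ (hn0 i))
    rw [← mem_powers_iff_mem_zpowers] at h
    exact (Submonoid.mem_powers_iff _ _).mp h
  choose e hge using he
  have hcrit : ∀ q, q.Prime → q ∣ p - 1 → ∀ j, (IsResidue p q (n j) ↔ q ∣ e j) := by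
    intro q hq hqd j
    rw [isResidue_iff_unit q hq.pos (n j) (Units.mk0 _ (hn0 j)) rfl, ← hge j]
    exact pow_mem_iff g hg q (e j) (hcard ▸ hqd)
  have hAe : ∀ i, ∀ q ∈ Q i, ¬ q ∣ e i := fun i q hqq hd =>
    (hA i q hqq).2 ((hcrit q (hQprime i q hqq) (hQdvd i q hqq) i).mpr hd)
  have hBe : ∀ i j, j < i → ∀ q ∈ Q j, q ∣ e i := fun i j hji q hqq =>
    (hcrit q (hQprime j q hqq) (hQdvd j q hqq) i).mp (hB i j hji q hqq)
  have main : ∀ i : ℕ, ∃ a : Fin (k + 1) → ℕ, a 0 = 1 ∧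
      (∀ l : Fin (k + 1), 0 < (l : ℕ) → a l < jacobsthal (∏ q ∈ Q l, q)) ∧
      (∀ l : Fin (k + 1), i < (l : ℕ) → a l = 0) ∧
      (∀ j : Fin (k + 1), (j : ℕ) ≤ i → ∀ q ∈ Q j, ¬ (q : ℤ) ∣ (∑ l, (a l : ℤ) * e l)) := by
    intro i
    induction i with
    | zero =>
      refine ⟨fun l => if l = 0 then 1 else 0, if_pos rfl, ?_, ?_, ?_⟩
      · intro l hl
        have hlne : l ≠ 0 := fun h => by rw [h] at hl; simp at hl
        simp only [if_neg hlne]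
        exact (jacobsthal_mem _ (Finset.prod_pos fun q hqq => (hQprime l q hqq).pos)).1
      · intro l hl
        have hlne : l ≠ 0 := fun h => by rw [h] at hl; simp at hl
        simp only [if_neg hlne]
      · intro j hj q hqq hdvd
        have hj0 : j = 0 := by ext; simp only [Fin.val_zero]; omega
        subst hj0
        have hsum : (∑ l, (((if l = (0 : Fin (k+1)) then 1 else 0 : ℕ)) : ℤ) * e l)
            = (e 0 : ℤ) := by
          rw [Fintype.sum_eq_single (0 : Fin (k+1)) (fun x hx => by simp [if_neg hx])]
          simp
        simp only [hsum] at hdvd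
        exact hAe 0 q hqq (by exact_mod_cast hdvd)
    | succ i ih =>
      obtain ⟨a, ha0, habd, haz, hagood⟩ := ih
      by_cases hik : i + 1 ≤ k
      · set ι : Fin (k + 1) := ⟨i + 1, by omega⟩ with hι
        have hval : (ι : ℕ) = i + 1 := rfl
        have hιne0 : ι ≠ 0 := fun h => by
          have := congrArg Fin.val h; rw [hval] at this; simp at this
        set S : ℤ := ∑ l, (a l : ℤ) * e l with hS
        have hSnonneg : 0 ≤ S := Finset.sum_nonneg fun l _ => by positivity
        obtain ⟨c, hc, hcgood⟩ := step_lemma (Q ι) (hQprime ι) (e ι) (hAe ι) S.toNat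
        rw [Int.toNat_of_nonneg hSnonneg] at hcgood
        set a' : Fin (k + 1) → ℕ := Function.update a ι c with ha'
        have haι : a ι = 0 := haz ι (by omega)
        have hsum' : (∑ l, (a' l : ℤ) * e l) = S + (c : ℤ) * e ι := by
          rw [hS, ha']
          rw [← Finset.sum_erase_add _ _ (Finset.mem_univ ι),
              ← Finset.sum_erase_add _ _ (Finset.mem_univ ι)]
          rw [Function.update_self, haι]
          have hcongr : (∑ l ∈ Finset.univ.erase ι, ((Function.update a ι c l : ℕ) : ℤ) * e l)
              = ∑ l ∈ Finset.univ.erase ι, ((a l : ℕ) : ℤ) * e l :=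
            Finset.sum_congr rfl fun l hl => by
              rw [Function.update_of_ne (Finset.mem_erase.mp hl).1]
          rw [hcongr]
          push_cast
          ring
        refine ⟨a', ?_, ?_, ?_, ?_⟩
        · rw [ha', Function.update_of_ne (fun h => hιne0 h.symm), ha0]
        · intro l hl
          by_cases hlι : l = ι
          · subst hlι; rw [ha', Function.update_self]; exact hc
          · rw [ha', Function.update_of_ne hlι]; exact habd l hl
        · intro l hl
          have hlι : l ≠ ι := fun h => by rw [h, hval] at hl; omega
          rw [ha', Function.update_of_ne hlι]
          exact haz l (by omega)
        · intro j hj q hqq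
          rw [hsum']
          by_cases hjι : j = ι
          · subst hjι
            intro hd
            exact hcgood q hqq (by rwa [add_comm] at hd)
          · have hji : (j : ℕ) ≤ i := by
              have : (j : ℕ) ≠ i + 1 := fun h => hjι (by ext; rw [h, hval])
              omega
            have hqeι : (q : ℤ) ∣ (e ι : ℤ) :=
              Int.natCast_dvd_natCast.mpr
                (hBe ι j (by rw [Fin.lt_def, hval]; omega) q hqq)
            intro hd
            have hqS : (q : ℤ) ∣ S := by
              have h2 : (q : ℤ) ∣ (c : ℤ) * e ι := Dvd.dvd.mul_left hqeι c
              have h3 := dvd_sub hd h2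
              simpa using h3
            exact hagood j hji q hqq hqS
      · refine ⟨a, ha0, habd, fun l hl => haz l (by omega), fun j hj q hqq => ?_⟩
        exact hagood j (by omega) q hqq
  obtain ⟨a, ha0, habd, _, hagood⟩ := main k
  refine ⟨a, ha0, habd, ?_⟩
  intro i q hqq
  have hqprime := hQprime i q hqq
  have hqdvd := hQdvd i q hqq
  have hpprod : ¬ (p : ℤ) ∣ ∏ j, n j ^ a j := by
    intro hd
    obtain ⟨j, _, hj⟩ := (Prime.dvd_finset_prod_iff (Nat.prime_iff_prime_int.mp hp) _).mp hd
    exact hnp j ((Nat.prime_iff_prime_int.mp hp).dvd_of_dvd_pow hj)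
  refine ⟨hpprod, ?_⟩
  have hnj : ∀ j, ((n j : ZMod p)) = ((g : ZMod p)) ^ e j := by
    intro j
    have h := congrArg (Units.val) (hge j)
    simpa using h.symm
  have hu : ((g ^ (∑ l, a l * e l) : (ZMod p)ˣ) : ZMod p)
      = (((∏ j, n j ^ a j : ℤ) : ZMod p)) := by
    push_cast
    rw [← Finset.prod_pow_eq_pow_sum]
    refine Finset.prod_congr rfl fun j _ => ?_
    rw [hnj j, ← pow_mul, mul_comm]
  intro hres
  rw [isResidue_iff_unit q hqprime.pos _ _ hu] at hres
  have hdvd := (pow_mem_iff g hg q (∑ l, a l * e l) (hcard ▸ hqdvd)).mp hres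
  refine hagood i (Nat.lt_succ_iff.mp i.2) q hqq ?_
  exact_mod_cast Int.natCast_dvd_natCast.mpr hdvd
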